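/- Let T > 0, σ ≥ 0, Δ ∈ ℝ, and let the temporary price impact be f(ν) = a₁ν + a₂ with a₁ > 0 and the permanent price impact be g(ν) = c₁ν² + c₂ν with c₁ > 0, c₂ ∈ ℝ. Define H(t,S,q) = q(S − Δ/2 − a₂) − (c₂/2)q² − 4(c₁q + a₁)³ / (9c₁²(T−t)). Then at every point (t,S,q) with 0 ≤ t < T and q > 0, H satisfies the HJB equation: ∂ₜH(t,S,q) + (σ²/2) ∂²_{SS}H(t,S,q) + sup_{ν ≥ 0} { −(c₁ν² + c₂ν) ∂_S H(t,S,q) − ν ∂_q H(t,S,q) + (S − Δ/2 − a₁ν − a₂)ν } = 0. -/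

import Mathlib

/-- Value function for the optimal liquidation problem with linear temporary
price impact `f(ν) = a₁ν + a₂` and quadratic permanent price impact
`g(ν) = c₁ν² + c₂ν`. -/
noncomputable def Hquad (T Δ a₁ a₂ c₁ c₂ : ℝ) (t S q : ℝ) : ℝ :=
  q * (S - Δ / 2 - a₂) - c₂ / 2 * q ^ 2 - 4 * (c₁ * q + a₁) ^ 3 / (9 * c₁ ^ 2 * (T - t))

/-- With linear TPI and quadratic PPI, the candidate value function
`H(t,S,q) = q(S − Δ/2 − a₂) − (c₂/2)q² − 4(c₁q + a₁)³/(9c₁²(T−t))` satisfies the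
HJB equation
`∂ₜH + (σ²/2)∂²_{SS}H + sup_{ν ≥ 0} {−(c₁ν² + c₂ν) ∂_S H − ν ∂_q H + (S − Δ/2 − a₁ν − a₂)ν} = 0`
at every point with `0 ≤ t < T` and `q > 0`. -/
theorem stmt_2 (T σ Δ a₁ a₂ c₁ c₂ : ℝ) (hT : 0 < T) (hσ : 0 ≤ σ) (ha₁ : 0 < a₁)
    (hc₁ : 0 < c₁) (t S q : ℝ) (ht0 : 0 ≤ t) (htT : t < T) (hq : 0 < q) :
    deriv (fun τ => Hquad T Δ a₁ a₂ c₁ c₂ τ S q) t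
      + σ ^ 2 / 2 * deriv (deriv (fun s => Hquad T Δ a₁ a₂ c₁ c₂ t s q)) S
      + sSup {y : ℝ | ∃ ν : ℝ, 0 ≤ ν ∧ y =
          -(c₁ * ν ^ 2 + c₂ * ν) * deriv (fun s => Hquad T Δ a₁ a₂ c₁ c₂ t s q) S
          - ν * deriv (fun p => Hquad T Δ a₁ a₂ c₁ c₂ t S p) q
          + (S - Δ / 2 - a₁ * ν - a₂) * ν} = 0 := by
  have hD : (0:ℝ) < T - t := by linarith
  have hA : (0:ℝ) < c₁ * q + a₁ := by positivity
  set A : ℝ := c₁ * q + a₁ with hAdef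
  have hden : (9 : ℝ) * c₁ ^ 2 * (T - t) ≠ 0 := by positivity
  set M : ℝ := 4 * A ^ 3 / (9 * c₁ ^ 2 * (T - t) ^ 2) with hMdef
  set B : ℝ := 4 * A ^ 2 / (3 * c₁ * (T - t)) with hBdef
  -- t-derivative
  have ht : HasDerivAt (fun τ => Hquad T Δ a₁ a₂ c₁ c₂ τ S q) (-M) t := by
    have hg : HasDerivAt (fun τ : ℝ => 9 * c₁ ^ 2 * (T - τ)) (-(9 * c₁ ^ 2)) t := by
      simpa using ((hasDerivAt_id t).const_sub T).const_mul (9 * c₁ ^ 2)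
    have hdiv := (hasDerivAt_const t (4 * (c₁ * q + a₁) ^ 3)).div hg hden
    have h := (hasDerivAt_const t (q * (S - Δ / 2 - a₂) - c₂ / 2 * q ^ 2)).sub hdiv
    unfold Hquad
    refine h.congr_deriv ?_
    rw [hMdef]
    field_simp
    rw [hAdef]; ring
  -- S-derivative
  have hS : ∀ s : ℝ, HasDerivAt (fun s => Hquad T Δ a₁ a₂ c₁ c₂ t s q) q s := by
    intro s
    have h : HasDerivAt (fun x : ℝ => q * x - (q * (Δ / 2 + a₂) + c₂ / 2 * q ^ 2
        + 4 * (c₁ * q + a₁) ^ 3 / (9 * c₁ ^ 2 * (T - t)))) q s := by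
      simpa using ((hasDerivAt_id s).const_mul q).sub_const
        (q * (Δ / 2 + a₂) + c₂ / 2 * q ^ 2 + 4 * (c₁ * q + a₁) ^ 3 / (9 * c₁ ^ 2 * (T - t)))
    have heq : (fun s => Hquad T Δ a₁ a₂ c₁ c₂ t s q) = fun x : ℝ => q * x - (q * (Δ / 2 + a₂)
        + c₂ / 2 * q ^ 2 + 4 * (c₁ * q + a₁) ^ 3 / (9 * c₁ ^ 2 * (T - t))) := by
      funext x; unfold Hquad; ring
    rw [heq]; exact h
  have hS1 : deriv (fun s => Hquad T Δ a₁ a₂ c₁ c₂ t s q) = fun _ => q :=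
    funext fun s => (hS s).deriv
  have hS2 : deriv (deriv (fun s => Hquad T Δ a₁ a₂ c₁ c₂ t s q)) S = 0 := by
    rw [hS1]; simp
  -- q-derivative
  set Dq : ℝ := (S - Δ / 2 - a₂) - c₂ * q - 4 * A ^ 2 / (3 * c₁ * (T - t)) with hDqdef
  have hQ : HasDerivAt (fun p => Hquad T Δ a₁ a₂ c₁ c₂ t S p) Dq q := by
    have h1 : HasDerivAt (fun p : ℝ => p * (S - Δ / 2 - a₂)) (S - Δ / 2 - a₂) q := by
      simpa using (hasDerivAt_id q).mul_const (S - Δ / 2 - a₂)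
    have h2 : HasDerivAt (fun p : ℝ => c₂ / 2 * p ^ 2) (c₂ / 2 * (2 * q)) q := by
      simpa using (hasDerivAt_pow 2 q).const_mul (c₂ / 2)
    have h3 : HasDerivAt (fun p : ℝ => c₁ * p + a₁) c₁ q := by
      simpa using ((hasDerivAt_id q).const_mul c₁).add_const a₁
    have h4 : HasDerivAt (fun p : ℝ => 4 * (c₁ * p + a₁) ^ 3 / (9 * c₁ ^ 2 * (T - t)))
        (4 * (3 * (c₁ * q + a₁) ^ 2 * c₁) / (9 * c₁ ^ 2 * (T - t))) q := by
      have := ((h3.pow 3).const_mul 4).div_const (9 * c₁ ^ 2 * (T - t))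
      refine this.congr_deriv ?_
      norm_num
    have h := (h1.sub h2).sub h4
    unfold Hquad
    refine h.congr_deriv ?_
    rw [hDqdef, hAdef]; field_simp; ring
  have hS0 : deriv (fun s => Hquad T Δ a₁ a₂ c₁ c₂ t s q) S = q := (hS S).deriv
  rw [ht.deriv, hS2, hQ.deriv, hS0]
  -- the supremum
  have hexpr : ∀ ν : ℝ, -(c₁ * ν ^ 2 + c₂ * ν) * q - ν * Dq + (S - Δ / 2 - a₁ * ν - a₂) * ν
      = -A * ν ^ 2 + B * ν := by
    intro ν
    rw [hDqdef, hBdef, hAdef]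
    field_simp
    ring
  have hM : M = B ^ 2 / (4 * A) := by
    rw [hMdef, hBdef]
    field_simp
    ring
  have hsup : sSup {y : ℝ | ∃ ν : ℝ, 0 ≤ ν ∧ y =
      -(c₁ * ν ^ 2 + c₂ * ν) * q - ν * Dq + (S - Δ / 2 - a₁ * ν - a₂) * ν} = M := by
    apply IsGreatest.csSup_eq
    constructor
    · refine ⟨2 * A / (3 * c₁ * (T - t)), by positivity, ?_⟩
      rw [hexpr, hM, hBdef]
      field_simp
      ring
    · rintro y ⟨ν, hν, rfl⟩
      rw [hexpr, hM, le_div_iff₀ (by positivity)]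
      nlinarith [sq_nonneg (2 * A * ν - B)]
  rw [hsup]
  ring
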